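/- Let R be a principal ideal domain and let ⟨m⟩ be a non-simple cyclic left R-module generated by m, with nonzero annihilator Ann_R(m) = ⟨a⟩. Then ⟨m⟩ has a proper essential submodule if and only if a is not square-free. -/

import Mathlib

/-- `E` is a proper essential submodule of `M`: a proper nontrivial submodule that
intersects every nonzero submodule nontrivially. -/
def IsProperEssential {R M : Type*} [Ring R] [AddCommGroup M] [Module R M]
    (E : Submodule R M) : Prop :=
  E ≠ ⊥ ∧ E ≠ ⊤ ∧ ∀ N : Submodule R M, N ≠ ⊥ → E ⊓ N ≠ ⊥

/-- A non-simple cyclic module `⟨m⟩` over a PID with nonzero annihilator `⟨a⟩`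
has a proper essential submodule iff `a` is not square-free. -/
theorem cyclic_pid_properEssential_iff {R M : Type*} [CommRing R] [IsDomain R]
    [IsPrincipalIdealRing R] [AddCommGroup M] [Module R M] (m : M) (a : R) (ha : a ≠ 0)
    (hann : LinearMap.ker (LinearMap.toSpanSingleton R M m) = Ideal.span {a})
    (hns : ¬ IsSimpleModule R ↥(R ∙ m)) :
    (∃ E : Submodule R ↥(R ∙ m), IsProperEssential E) ↔ ¬ Squarefree a := by
  set m' : ↥(R ∙ m) := ⟨m, Submodule.mem_span_singleton_self m⟩ with hm'def
  have hm : ∀ r : R, r • m = 0 ↔ a ∣ r := by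
    intro r
    rw [← Ideal.mem_span_singleton, ← hann, LinearMap.mem_ker,
      LinearMap.toSpanSingleton_apply]
  have hm' : ∀ r : R, r • m' = 0 ↔ a ∣ r := by
    intro r
    rw [← hm r, Subtype.ext_iff]
    rfl
  have hsur : ∀ x : ↥(R ∙ m), ∃ r : R, r • m' = x := by
    intro x
    obtain ⟨r, hr⟩ := Submodule.mem_span_singleton.mp x.2
    exact ⟨r, Subtype.ext hr⟩
  constructor
  · -- essential ⇒ not squarefree
    rintro ⟨E, hEbot, hEtop, hEess⟩ hsq
    set I : Ideal R := E.comap (LinearMap.toSpanSingleton R _ m') with hIdef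
    have hmemI : ∀ r : R, r ∈ I ↔ r • m' ∈ E := fun r => Iff.rfl
    obtain ⟨d, hd⟩ := Submodule.IsPrincipal.principal I
    replace hd : I = Ideal.span {d} := hd
    have haI : a ∈ I := by
      rw [hmemI, (hm' a).mpr dvd_rfl]
      exact E.zero_mem
    have hda : d ∣ a := Ideal.mem_span_singleton.mp (hd ▸ haI)
    obtain ⟨d', hdd'⟩ := hda
    have hdu : ¬ IsUnit d := by
      intro hu
      apply hEtop
      rw [eq_top_iff]
      intro x _
      obtain ⟨r, rfl⟩ := hsur x
      rw [← hmemI, hd, Ideal.span_singleton_eq_top.mpr hu]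
      trivial
    have hd'0 : d' ≠ 0 := by
      rintro rfl
      exact ha (by rw [hdd', mul_zero])
    have hrel : IsRelPrime d d' := IsRelPrime.of_squarefree_mul (hdd' ▸ hsq)
    have hNbot : (R ∙ (d' • m')) ≠ ⊥ := by
      rw [Submodule.ne_bot_iff]
      refine ⟨d' • m', Submodule.mem_span_singleton_self _, ?_⟩
      rw [Ne, hm' d']
      rintro ⟨t, ht⟩
      apply hdu
      have h1 : d' * 1 = d' * (d * t) := by
        rw [mul_one, ← mul_assoc, mul_comm d' d, ← hdd', ht]
      exact IsUnit.of_mul_eq_one (a := d) t (mul_left_cancel₀ hd'0 h1).symm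
    apply hEess _ hNbot
    rw [eq_bot_iff]
    rintro x ⟨hxE, hxN⟩
    obtain ⟨s, rfl⟩ := Submodule.mem_span_singleton.mp hxN
    obtain ⟨r, hr⟩ := hsur (s • d' • m')
    have hrI : r ∈ I := by rw [hmemI, hr]; exact hxE
    have hdr : d ∣ r := Ideal.mem_span_singleton.mp (hd ▸ hrI)
    have h0 : (s * d' - r) • m' = 0 := by
      rw [sub_smul, mul_smul, hr, sub_self]
    obtain ⟨t, ht⟩ := (hm' _).mp h0
    have hdsd' : d ∣ s * d' := by
      have : s * d' = a * t + r := by rw [← ht]; ring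
      rw [this]
      exact dvd_add (Dvd.dvd.mul_right ⟨d', hdd'⟩ t) hdr
    obtain ⟨u, rfl⟩ := hrel.dvd_of_dvd_mul_right hdsd'
    show (d * u) • d' • m' ∈ (⊥ : Submodule R _)
    have h2 : d * u * d' = u * a := by rw [hdd']; ring
    rw [Submodule.mem_bot, ← mul_smul, h2, mul_smul, (hm' a).mpr dvd_rfl, smul_zero]
  · -- not squarefree ⇒ essential submodule exists
    intro hsq
    rw [Squarefree] at hsq
    push_neg at hsq
    obtain ⟨p, hppa, hpu⟩ := hsq
    obtain ⟨c, hc⟩ := hppa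
    have hp0 : p ≠ 0 := by rintro rfl; exact ha (by rw [hc, mul_zero, zero_mul])
    have hpa : p ∣ a := ⟨p * c, by rw [hc, mul_assoc]⟩
    have hpne : ¬ a ∣ p := by
      rintro ⟨t, ht⟩
      apply hpu
      have h1 : p * 1 = p * (p * (c * t)) := by
        rw [mul_one, ← mul_assoc, ← mul_assoc, ← hc, ← ht]
      exact IsUnit.of_mul_eq_one _ (mul_left_cancel₀ hp0 h1).symm
    refine ⟨R ∙ (p • m'), ?_, ?_, ?_⟩
    · rw [Submodule.ne_bot_iff]
      exact ⟨p • m', Submodule.mem_span_singleton_self _, fun h => hpne ((hm' p).mp h)⟩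
    · intro h
      have hmm : m' ∈ R ∙ (p • m') := h ▸ Submodule.mem_top
      obtain ⟨s, hs⟩ := Submodule.mem_span_singleton.mp hmm
      have h0 : (s * p - 1) • m' = 0 := by
        rw [sub_smul, mul_smul, hs, one_smul, sub_self]
      obtain ⟨t, ht⟩ := (hm' _).mp h0
      apply hpu
      apply isUnit_of_dvd_one
      have h1 : (1 : R) = s * p - a * t := by rw [← ht]; ring
      rw [h1]
      exact dvd_sub (dvd_mul_left p s) (hpa.mul_right t)
    · intro N hN
      obtain ⟨x, hxN, hx0⟩ := (Submodule.ne_bot_iff N).mp hN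
      obtain ⟨r, rfl⟩ := hsur x
      have har : ¬ a ∣ r := fun h => hx0 ((hm' r).mpr h)
      obtain ⟨d, hd⟩ := Submodule.IsPrincipal.principal
        (Ideal.span {r} ⊔ Ideal.span {a} : Ideal R)
      replace hd : (Ideal.span {r} ⊔ Ideal.span {a} : Ideal R) = Ideal.span {d} := hd
      have hdr : d ∣ r := Ideal.mem_span_singleton.mp
        (hd ▸ Submodule.mem_sup_left (Ideal.mem_span_singleton_self r))
      have hdmem : d ∈ (Ideal.span {r} ⊔ Ideal.span {a} : Ideal R) := by
        rw [hd]; exact Ideal.mem_span_singleton_self d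
      obtain ⟨y, hy, z, hz, hyz⟩ := Submodule.mem_sup.mp hdmem
      obtain ⟨u, rfl⟩ := Ideal.mem_span_singleton.mp hy
      obtain ⟨v, rfl⟩ := Ideal.mem_span_singleton.mp hz
      have hdmN : d • m' ∈ N := by
        have hz0 : (a * v) • m' = 0 := by
          rw [mul_comm, mul_smul, (hm' a).mpr dvd_rfl, smul_zero]
        have heq : d • m' = u • (r • m') := by
          rw [← hyz, add_smul, hz0, add_zero, ← mul_smul, mul_comm]
        rw [heq]
        exact N.smul_mem u hxN
      have had : ¬ a ∣ d := fun h => har (h.trans hdr)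
      rw [Ne, eq_bot_iff]
      intro hle
      by_cases hpd : p ∣ d
      · obtain ⟨e, he⟩ := hpd
        have hmem : d • m' ∈ (R ∙ (p • m')) ⊓ N := by
          refine ⟨?_, hdmN⟩
          rw [he, mul_comm, mul_smul]
          exact Submodule.smul_mem _ e (Submodule.mem_span_singleton_self _)
        have h0 := hle hmem
        rw [Submodule.mem_bot] at h0
        exact had ((hm' d).mp h0)
      · have hmem : (p * d) • m' ∈ (R ∙ (p • m')) ⊓ N := by
          constructor
          · rw [mul_comm p d, mul_smul]
            exact Submodule.smul_mem _ d (Submodule.mem_span_singleton_self _)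
          · rw [mul_smul]
            exact N.smul_mem p hdmN
        have h0 := hle hmem
        rw [Submodule.mem_bot] at h0
        have hapd : a ∣ p * d := (hm' _).mp h0
        apply hpd
        have hpcd : p * c ∣ d := by
          have := hc ▸ hapd
          rwa [mul_assoc, mul_dvd_mul_iff_left hp0] at this
        exact dvd_trans (dvd_mul_right p c) hpcd
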